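/- Let D ⊆ ℝ³ be open, let ũ, u^d, ũ^c, v : D → ℂ³ be twice continuously differentiable with ũ = u^d + ũ^c and curl ũ^c = 0 on D, let m : D → ℂ be a function, and let z, μ ∈ ℂ with μ + z ≠ 0. If curl curl ũ − z(1+m)ũ − m v = μ(1+m)u^d pointwise on D, then the function u := u^d + (z/(μ+z))·ũ^c satisfies curl curl u − (z+μ)(1+m)u − m v = 0 pointwise on D. -/

import Mathlib

/-- Classical partial derivative `∂ᵢ f` of a function `f : ℝ³ → ℂ`. -/
noncomputable def pderiv3 (i : Fin 3) (f : (Fin 3 → ℝ) → ℂ) (x : Fin 3 → ℝ) : ℂ :=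
  fderiv ℝ f x (Pi.single i 1)

/-- Curl of a vector field `w : ℝ³ → ℂ³`:
`curl w = (∂₂w₃ − ∂₃w₂, ∂₃w₁ − ∂₁w₃, ∂₁w₂ − ∂₂w₁)`. -/
noncomputable def vcurl (w : (Fin 3 → ℝ) → Fin 3 → ℂ) (x : Fin 3 → ℝ) : Fin 3 → ℂ :=
  ![pderiv3 1 (fun y => w y 2) x - pderiv3 2 (fun y => w y 1) x,
    pderiv3 2 (fun y => w y 0) x - pderiv3 0 (fun y => w y 2) x,
    pderiv3 0 (fun y => w y 1) x - pderiv3 1 (fun y => w y 0) x]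

/-- Divergence of a vector field `w : ℝ³ → ℂ³`. -/
noncomputable def vdiv (w : (Fin 3 → ℝ) → Fin 3 → ℂ) (x : Fin 3 → ℝ) : ℂ :=
  ∑ i, pderiv3 i (fun y => w y i) x

lemma pderiv3_congr {f g : (Fin 3 → ℝ) → ℂ} {x} (h : f =ᶠ[nhds x] g) (i : Fin 3) :
    pderiv3 i f x = pderiv3 i g x := by
  unfold pderiv3; rw [h.fderiv_eq]

lemma vcurl_congr {w w' : (Fin 3 → ℝ) → Fin 3 → ℂ} {x} (h : w =ᶠ[nhds x] w') :
    vcurl w x = vcurl w' x := by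
  unfold vcurl
  have h2 : ∀ i j : Fin 3,
      pderiv3 i (fun y => w y j) x = pderiv3 i (fun y => w' y j) x := fun i j =>
    pderiv3_congr (h.mono fun y hy => by rw [hy]) i
  simp only [h2]

lemma pderiv3_add_smul (i : Fin 3) (f g : (Fin 3 → ℝ) → ℂ) (c : ℂ) (x : Fin 3 → ℝ)
    (hf : DifferentiableAt ℝ f x) (hg : DifferentiableAt ℝ g x) :
    pderiv3 i (fun y => f y + c * g y) x = pderiv3 i f x + c * pderiv3 i g x := by
  unfold pderiv3
  rw [fderiv_fun_add hf (hg.const_mul c), fderiv_const_mul hg c]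
  simp

lemma vcurl_add_smul (w₁ w₂ : (Fin 3 → ℝ) → Fin 3 → ℂ) (c : ℂ) (x : Fin 3 → ℝ)
    (h1 : DifferentiableAt ℝ w₁ x) (h2 : DifferentiableAt ℝ w₂ x) :
    vcurl (fun y => w₁ y + c • w₂ y) x = vcurl w₁ x + c • vcurl w₂ x := by
  have d1 := fun j => (differentiableAt_pi.mp h1 j)
  have d2 := fun j => (differentiableAt_pi.mp h2 j)
  have e : ∀ i j : Fin 3, pderiv3 i (fun y => w₁ y j + c * w₂ y j) x
      = pderiv3 i (fun y => w₁ y j) x + c * pderiv3 i (fun y => w₂ y j) x := fun i j =>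
    pderiv3_add_smul i _ _ c x (d1 j) (d2 j)
  funext j
  fin_cases j <;>
    simp [vcurl, e, Matrix.cons_val_zero, Matrix.cons_val_one] <;> ring

theorem stmt8 (D : Set (Fin 3 → ℝ)) (hD : IsOpen D)
    (ut ud uc v : (Fin 3 → ℝ) → Fin 3 → ℂ) (m : (Fin 3 → ℝ) → ℂ) (z μ : ℂ)
    (hut : ContDiffOn ℝ 2 ut D) (hud : ContDiffOn ℝ 2 ud D)
    (huc : ContDiffOn ℝ 2 uc D) (hv : ContDiffOn ℝ 2 v D)
    (hμz : μ + z ≠ 0)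
    (hdecomp : ∀ x ∈ D, ut x = ud x + uc x)
    (hcurl : ∀ x ∈ D, vcurl uc x = 0)
    (heq : ∀ x ∈ D,
      vcurl (vcurl ut) x - (z * (1 + m x)) • ut x - m x • v x = (μ * (1 + m x)) • ud x) :
    ∀ x ∈ D,
      vcurl (vcurl (fun y => ud y + (z / (μ + z)) • uc y)) x
        - ((z + μ) * (1 + m x)) • (ud x + (z / (μ + z)) • uc x) - m x • v x = 0 := by

  intro x hx
  have hdud : ∀ y ∈ D, DifferentiableAt ℝ ud y := fun y hy =>
    ((hud.differentiableOn (by norm_num)) y hy).differentiableAt (hD.mem_nhds hy)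
  have hduc : ∀ y ∈ D, DifferentiableAt ℝ uc y := fun y hy =>
    ((huc.differentiableOn (by norm_num)) y hy).differentiableAt (hD.mem_nhds hy)
  have key : ∀ y ∈ D,
      vcurl (fun p => ud p + (z / (μ + z)) • uc p) y = vcurl ut y := by
    intro y hy
    rw [vcurl_add_smul _ _ _ y (hdud y hy) (hduc y hy), hcurl y hy, smul_zero, add_zero]
    have hev : ut =ᶠ[nhds y] fun p => ud p + (1 : ℂ) • uc p := by
      filter_upwards [hD.mem_nhds hy] with p hp
      simp [hdecomp p hp]
    rw [vcurl_congr hev, vcurl_add_smul _ _ 1 y (hdud y hy) (hduc y hy), hcurl y hy,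
      smul_zero, add_zero]
  have hcc : vcurl (vcurl (fun y => ud y + (z / (μ + z)) • uc y)) x
      = vcurl (vcurl ut) x := by
    refine vcurl_congr ?_
    filter_upwards [hD.mem_nhds hx] with y hy using key y hy
  rw [hcc]
  have h1 := heq x hx
  have h2 := hdecomp x hx
  have hzz : (z + μ) * (z / (μ + z)) = z := by field_simp; ring
  funext i
  have h1i := congrFun h1 i
  have h2i := congrFun h2 i
  simp only [Pi.add_apply, Pi.sub_apply, Pi.smul_apply, smul_eq_mul, Pi.zero_apply] at h1i h2i ⊢
  linear_combination h1i + (z * (1 + m x)) * h2i - ((1 + m x) * uc x i) * hzz
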